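/- Let S be a state space, A a finite nonempty action set, r : S × A → ℝ a reward function, and F : S × A → S a deterministic transition function. Let Z be a measurable trajectory space with an integrable return function R : Z → ℝ, and suppose the policies π and μ induce, from each state, probability measures η_π(s) and η_μ(s) on Z with R integrable with respect to each. Define V^π(s) := ∫ R dη_π(s), V^μ(s') := ∫ R dη_μ(s'), Q^π(s,a) := r(s,a) + V^π(F(s,a)), A^π(s,a) := Q^π(s,a) − V^π(s); and the paired quantities V^{π,μ}(s,s') := ∫ (R(ζ) − R(ζ')) d(η_π(s) ×ₘ η_μ(s'))(ζ,ζ'), Q^{π,μ}(s,s';a) := r(s,a) + V^{π,μ}(F(s,a), s'), A^{π,μ}(s,s';a) := Q^{π,μ}(s,s';a) − V^{π,μ}(s,s'). Then for all states s, s' and every action a, A^π(s,a) = A^{π,μ}(s,s';a). -/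

import Mathlib

open MeasureTheory

lemma prod_integral_sub {Z : Type*} [MeasurableSpace Z] (μ ν : Measure Z)
    [IsProbabilityMeasure μ] [IsProbabilityMeasure ν] (R : Z → ℝ)
    (hμ : Integrable R μ) (hν : Integrable R ν) :
    ∫ p : Z × Z, (R p.1 - R p.2) ∂(μ.prod ν) = (∫ ζ, R ζ ∂μ) - ∫ ζ, R ζ ∂ν := by
  have h1 : Integrable (fun p : Z × Z => R p.1) (μ.prod ν) := by
    simpa using hμ.smul_prod (integrable_const (1 : ℝ))
  have h2 : Integrable (fun p : Z × Z => R p.2) (μ.prod ν) := by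
    simpa using (integrable_const (1 : ℝ)).smul_prod hν
  rw [integral_sub h1 h2, integral_fun_fst, integral_fun_snd]
  simp

/-- Lemma 1, equation (2): the advantage of π in the original MDP equals its
advantage in the self-competitive formulation baselined by a rollout of μ. -/
theorem advantage_eq_paired_advantage
    {S : Type*} [MeasurableSpace S] {A : Type*} [Fintype A] [Nonempty A]
    {Z : Type*} [MeasurableSpace Z]
    (r : S → A → ℝ) (F : S → A → S)
    (ηπ ημ : S → Measure Z)
    [∀ s, IsProbabilityMeasure (ηπ s)] [∀ s, IsProbabilityMeasure (ημ s)]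
    (R : Z → ℝ)
    (hRπ : ∀ s, Integrable R (ηπ s)) (hRμ : ∀ s, Integrable R (ημ s))
    -- value functions of the original MDP
    (Vπ : S → ℝ) (hVπ : ∀ s, Vπ s = ∫ ζ, R ζ ∂(ηπ s))
    (Qπ : S → A → ℝ) (hQπ : ∀ s a, Qπ s a = r s a + Vπ (F s a))
    (Aπ : S → A → ℝ) (hAπ : ∀ s a, Aπ s a = Qπ s a - Vπ s)
    -- paired (self-competitive) value functions
    (Vπμ : S → S → ℝ)
    (hVπμ : ∀ s s', Vπμ s s' = ∫ p : Z × Z, (R p.1 - R p.2) ∂((ηπ s).prod (ημ s')))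
    (Qπμ : S → S → A → ℝ)
    (hQπμ : ∀ s s' a, Qπμ s s' a = r s a + Vπμ (F s a) s')
    (Aπμ : S → S → A → ℝ)
    (hAπμ : ∀ s s' a, Aπμ s s' a = Qπμ s s' a - Vπμ s s') :
    ∀ (s s' : S) (a : A), Aπ s a = Aπμ s s' a := by
  intro s s' a
  have key : ∀ t t', Vπμ t t' = Vπ t - ∫ ζ, R ζ ∂(ημ t') := by
    intro t t'
    rw [hVπμ, hVπ, prod_integral_sub _ _ _ (hRπ t) (hRμ t')]
  rw [hAπ, hAπμ, hQπ, hQπμ, key, key, hVπ]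
  ring
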